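/- Let E be a locally convex Hausdorff topological vector space over ℂ and let T : E → E be a continuous linear operator which is Cesàro bounded. Then T is mean ergodic if and only if for every x ∈ E one has lim_{n→∞} (1/n)·Tⁿx = 0 and the set {T^[n]x : n ≥ 1} is relatively compact in the weak topology σ(E,E′). -/

import Mathlib

open Filter Topology

/-- The `n`-th Cesàro mean of `T` applied to `x`: `(1/n) ∑_{m=1}^{n} Tᵐ x`. -/
noncomputable def cesaroMean {E : Type*} [AddCommGroup E] [Module ℂ E] [TopologicalSpace E]
    (T : E →L[ℂ] E) (n : ℕ) (x : E) : E :=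
  (n : ℂ)⁻¹ • ∑ m ∈ Finset.Icc 1 n, (T ^ m) x

open Uniformity

set_option linter.unusedSectionVars false

section ScalarAux

lemma tendsto_inv_natSucc_complex : Tendsto (fun n : ℕ => (((n:ℕ)+1 : ℂ))⁻¹) atTop (𝓝 0) := by
  have h1 : Tendsto (fun n : ℕ => (((n+1:ℕ):ℝ)⁻¹ : ℝ)) atTop (𝓝 0) :=
    tendsto_inv_atTop_nhds_zero_nat.comp (tendsto_add_atTop_nat 1)
  have h2 := (Complex.continuous_ofReal.tendsto _).comp h1
  simp only [Function.comp_def, Complex.ofReal_inv, Complex.ofReal_natCast] at h2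
  simpa [Nat.cast_add] using h2

lemma tendsto_ratio_complex : Tendsto (fun n : ℕ => ((n:ℂ)+2) * ((n:ℂ)+1)⁻¹) atTop (𝓝 1) := by
  have h : Tendsto (fun n : ℕ => 1 + ((n:ℂ)+1)⁻¹) atTop (𝓝 (1 + 0)) :=
    tendsto_const_nhds.add tendsto_inv_natSucc_complex
  rw [add_zero] at h
  refine h.congr fun n => ?_
  have hne : ((n:ℂ)+1) ≠ 0 := by exact_mod_cast Nat.cast_add_one_ne_zero (R := ℂ) n
  field_simp
  ring

lemma tendsto_ratio_complex' : Tendsto (fun n : ℕ => (n:ℂ) * ((n:ℂ)+1)⁻¹) atTop (𝓝 1) := by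
  have h : Tendsto (fun n : ℕ => 1 - ((n:ℂ)+1)⁻¹) atTop (𝓝 (1 - 0)) :=
    tendsto_const_nhds.sub tendsto_inv_natSucc_complex
  rw [sub_zero] at h
  refine h.congr fun n => ?_
  have hne : ((n:ℂ)+1) ≠ 0 := by exact_mod_cast Nat.cast_add_one_ne_zero (R := ℂ) n
  field_simp
  ring

end ScalarAux

section Aux

variable {E : Type*} [AddCommGroup E] [Module ℂ E] [TopologicalSpace E]
  [IsTopologicalAddGroup E] [ContinuousConstSMul ℂ E]

/-- Cesàro mean as a continuous linear map. -/
noncomputable def cesaroCLM (T : E →L[ℂ] E) (n : ℕ) : E →L[ℂ] E :=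
  (n : ℂ)⁻¹ • ∑ m ∈ Finset.Icc 1 n, T ^ m

lemma cesaroCLM_apply (T : E →L[ℂ] E) (n : ℕ) (x : E) :
    cesaroCLM T n x = cesaroMean T n x := by
  simp [cesaroCLM, cesaroMean, ContinuousLinearMap.sum_apply]

lemma sum_Icc_pow_apply (T : E →L[ℂ] E) (n : ℕ) (x : E) :
    ∑ m ∈ Finset.Icc 1 (n + 1), (T ^ m) x = ∑ i ∈ Finset.range (n + 1), (T ^ (i + 1)) x := by
  rw [show Finset.Icc 1 (n+1) = Finset.Ico 1 (n+2) by rfl]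
  rw [Finset.sum_Ico_eq_sum_range]
  simp [add_comm]

private lemma inv_card_smul_sum_const (n : ℕ) (x : E) :
    ((n + 1 : ℕ) : ℂ)⁻¹ • ∑ _m ∈ Finset.Icc 1 (n + 1), x = x := by
  rw [Finset.sum_const, Nat.card_Icc]
  simp only [Nat.add_sub_cancel]
  rw [← Nat.cast_smul_eq_nsmul ℂ, smul_smul,
    inv_mul_cancel₀ (by exact_mod_cast Nat.cast_add_one_ne_zero (R := ℂ) n), one_smul]

/-- Telescoping identity for the Cesàro means of `w - T w`. -/
lemma cesaro_sub (T : E →L[ℂ] E) (n : ℕ) (w : E) :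
    cesaroMean T (n + 1) (w - T w) = ((n + 1 : ℕ) : ℂ)⁻¹ • (T w - (T ^ (n + 2)) w) := by
  rw [cesaroMean, sum_Icc_pow_apply]
  congr 1
  have h : ∀ i : ℕ, (T ^ (i+1)) (w - T w) = (T ^ (i+1)) w - (T ^ (i+2)) w := by
    intro i
    rw [map_sub, pow_succ T (i+1), ContinuousLinearMap.mul_apply]
  simp only [h]
  rw [Finset.sum_range_sub' (fun i => (T ^ (i+1)) w)]
  norm_num

/-- The Cesàro mean of a fixed point. -/
lemma cesaro_fixed (T : E →L[ℂ] E) (n : ℕ) {y : E} (hy : T y = y) :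
    cesaroMean T (n + 1) y = y := by
  have hpow : ∀ m : ℕ, (T ^ (m + 1)) y = y := by
    intro m
    induction m with
    | zero => simpa [pow_one] using hy
    | succ k ih => rw [pow_succ, ContinuousLinearMap.mul_apply, hy, ih]
  rw [cesaroMean, sum_Icc_pow_apply]
  simp only [hpow]
  rw [Finset.sum_const, Finset.card_range, ← Nat.cast_smul_eq_nsmul ℂ, smul_smul,
    inv_mul_cancel₀ (by exact_mod_cast Nat.cast_add_one_ne_zero (R := ℂ) n), one_smul]

/-- `x - T^m x` is in the range of `1 - T`. -/
lemma sub_pow_mem (T : E →L[ℂ] E) (x : E) (m : ℕ) :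
    x - (T ^ m) x ∈ LinearMap.range ((1 - T : E →L[ℂ] E) : E →ₗ[ℂ] E) := by
  induction m with
  | zero => simp
  | succ k ih =>
    have h : x - (T ^ (k+1)) x = (x - (T ^ k) x) + (1 - T : E →L[ℂ] E) ((T ^ k) x) := by
      simp only [ContinuousLinearMap.sub_apply, ContinuousLinearMap.one_apply]
      have hc : (T ^ (k+1)) x = T ((T ^ k) x) := by
        rw [pow_succ', ContinuousLinearMap.mul_apply]
      rw [hc]
      abel
    rw [h]
    exact add_mem ih (LinearMap.mem_range_self _ _)

lemma sub_cesaro_mem (T : E →L[ℂ] E) (x : E) (n : ℕ) :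
    x - cesaroMean T (n + 1) x ∈ LinearMap.range ((1 - T : E →L[ℂ] E) : E →ₗ[ℂ] E) := by
  have h : x - cesaroMean T (n + 1) x
      = ((n+1:ℕ) : ℂ)⁻¹ • ∑ m ∈ Finset.Icc 1 (n+1), (x - (T ^ m) x) := by
    rw [Finset.sum_sub_distrib, smul_sub, cesaroMean, inv_card_smul_sum_const]
  rw [h]
  exact Submodule.smul_mem _ _ (Submodule.sum_mem _ fun m _ => sub_pow_mem T x m)

lemma cesaro_comm (T : E →L[ℂ] E) (n : ℕ) (x : E) :
    cesaroMean T n (T x) = T (cesaroMean T n x) := by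
  rw [cesaroMean, cesaroMean, map_smul, map_sum]
  congr 1
  refine Finset.sum_congr rfl fun m _ => ?_
  rw [← ContinuousLinearMap.mul_apply, ← pow_succ, pow_succ', ContinuousLinearMap.mul_apply]

/-- The difference identity used in the forward direction. -/
lemma cesaro_succ_diff (T : E →L[ℂ] E) (n : ℕ) (x : E) :
    ((n + 1 : ℕ) : ℂ)⁻¹ • (T ^ (n+1)) x
      = cesaroMean T (n + 1) x - ((n:ℂ) * ((n + 1 : ℕ) : ℂ)⁻¹) • cesaroMean T n x := by
  rcases Nat.eq_zero_or_pos n with rfl | hn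
  · simp [cesaroMean, pow_one]
  · have hsum : (n:ℂ) • cesaroMean T n x = ∑ m ∈ Finset.Icc 1 n, (T ^ m) x := by
      rw [cesaroMean, smul_smul, mul_inv_cancel₀ (by exact_mod_cast Nat.pos_iff_ne_zero.mp hn),
        one_smul]
    have h2 : ((n:ℂ) * ((n + 1 : ℕ) : ℂ)⁻¹) • cesaroMean T n x
        = ((n + 1 : ℕ) : ℂ)⁻¹ • ∑ m ∈ Finset.Icc 1 n, (T ^ m) x := by
      rw [mul_comm, ← smul_smul, hsum]
    rw [h2, cesaroMean, ← smul_sub]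
    congr 1
    rw [Finset.sum_Icc_succ_top (by omega : 1 ≤ n + 1)]
    abel

end Aux

section Conv

variable {E : Type*} [AddCommGroup E] [UniformSpace E] [IsUniformAddGroup E]

/-- An equicontinuous family tending to zero on a set tends to zero on its closure. -/
lemma tendsto_zero_closure {F : ℕ → E → E} (hF : Equicontinuous F) {D : Set E}
    (hD : ∀ z ∈ D, Tendsto (fun n => F n z) atTop (𝓝 (0 : E)))
    {x : E} (hx : x ∈ closure D) :
    Tendsto (fun n => F n x) atTop (𝓝 (0 : E)) := by
  intro U hU
  rw [mem_map]
  obtain ⟨V, hV, hVU⟩ := exists_nhds_zero_half hU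
  set V' : Set E := V ∩ (-V) with hV'def
  have hV' : V' ∈ 𝓝 (0 : E) := Filter.inter_mem hV (neg_mem_nhds_zero E hV)
  have hW : {p : E × E | p.2 - p.1 ∈ V'} ∈ 𝓤 E := by
    rw [uniformity_eq_comap_nhds_zero E]
    exact Filter.preimage_mem_comap hV'
  have hev : ∀ᶠ y in 𝓝 x, ∀ n, (F n x, F n y) ∈ {p : E × E | p.2 - p.1 ∈ V'} := hF x _ hW
  obtain ⟨z, hzS, hzD⟩ := mem_closure_iff_nhds.mp hx _ hev
  have hz : ∀ n, F n z - F n x ∈ V' := hzS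
  have hz2 : ∀ᶠ n in atTop, F n z ∈ V := (hD z hzD) (mem_of_superset hV (by simp))
  filter_upwards [hz2] with n hn
  have h1 : F n x - F n z ∈ V := by
    have h2 := (hz n).2
    simpa using Set.neg_mem_neg.mpr h2
  have h3 := hVU _ hn _ h1
  simpa using h3

variable [Module ℂ E] [ContinuousSMul ℂ E]

lemma tendsto_inv_smul_zero (v : E) :
    Tendsto (fun n : ℕ => (((n:ℕ)+1 : ℂ))⁻¹ • v) atTop (𝓝 0) := by
  simpa using tendsto_inv_natSucc_complex.smul_const v

lemma base_tendsto (T : E →L[ℂ] E)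
    (h1 : ∀ x : E, Tendsto (fun n : ℕ => (n : ℂ)⁻¹ • (T ^ n) x) atTop (𝓝 (0 : E))) (w : E) :
    Tendsto (fun n : ℕ => ((n+1:ℕ) : ℂ)⁻¹ • (T w - (T ^ (n + 2)) w)) atTop (𝓝 (0 : E)) := by
  have hA : Tendsto (fun n : ℕ => ((n+1:ℕ) : ℂ)⁻¹ • T w) atTop (𝓝 (0:E)) := by
    simpa using tendsto_inv_smul_zero (T w)
  have hB : Tendsto (fun n : ℕ => ((n+1:ℕ) : ℂ)⁻¹ • (T ^ (n+2)) w) atTop (𝓝 (0:E)) := by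
    have h2 : Tendsto (fun n : ℕ => ((n+2:ℕ) : ℂ)⁻¹ • (T ^ (n+2)) w) atTop (𝓝 (0:E)) :=
      (h1 w).comp (tendsto_add_atTop_nat 2)
    have h3 := tendsto_ratio_complex.smul h2
    rw [one_smul] at h3
    refine h3.congr fun n => ?_
    rw [smul_smul]
    congr 1
    have hne1 : ((n:ℂ)+1) ≠ 0 := by exact_mod_cast Nat.cast_add_one_ne_zero (R := ℂ) n
    have hne2 : ((n:ℂ)+2) ≠ 0 := by
      have h4 : ((n+2:ℕ):ℂ) ≠ 0 := Nat.cast_ne_zero.mpr (by omega)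
      push_cast at h4
      exact h4
    push_cast
    field_simp
  have h5 := hA.sub hB
  rw [sub_zero] at h5
  refine h5.congr fun n => ?_
  rw [smul_sub]

end Conv

section Weak

variable {E : Type*} [AddCommGroup E] [Module ℂ E] [Module ℝ E] [IsScalarTower ℝ ℂ E]
  [UniformSpace E] [IsUniformAddGroup E] [ContinuousSMul ℂ E]
  [LocallyConvexSpace ℝ E] [T2Space E]

lemma weak_t2 : T2Space (WeakSpace ℂ E) := by
  have : ContinuousSMul ℝ E := IsScalarTower.continuousSMul ℂ
  have hinj : Function.Injective ((topDualPairing ℂ E).flip) := by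
    intro a b hab
    by_contra h
    obtain ⟨f, hf⟩ := RCLike.geometric_hahn_banach_point_point (𝕜 := ℂ) h
    have h2 : f a = f b := LinearMap.congr_fun hab f
    rw [h2] at hf
    exact lt_irrefl _ hf
  exact (WeakBilin.isEmbedding hinj).t2Space

end Weak


/-- A Cesàro bounded operator on a locally convex Hausdorff space is mean ergodic if and only
if `(1/n) Tⁿ x → 0` and `{T^[n] x : n ≥ 1}` is relatively weakly compact, for every `x`. -/
theorem stmt1 {E : Type*} [AddCommGroup E] [Module ℂ E] [Module ℝ E] [IsScalarTower ℝ ℂ E]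
    [UniformSpace E] [IsUniformAddGroup E] [ContinuousSMul ℂ E]
    [LocallyConvexSpace ℝ E] [T2Space E]
    (T : E →L[ℂ] E)
    -- `T` is Cesàro bounded: the family `{T^[n] : n ≥ 1}` is equicontinuous
    (hCes : Equicontinuous fun n : ℕ => cesaroMean T (n + 1)) :
    -- `T` is mean ergodic
    (∃ P : E →L[ℂ] E, ∀ x : E,
        Tendsto (fun n : ℕ => cesaroMean T (n + 1) x) atTop (𝓝 (P x))) ↔
      ∀ x : E,
        Tendsto (fun n : ℕ => (n : ℂ)⁻¹ • (T ^ n) x) atTop (𝓝 (0 : E)) ∧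
        IsCompact (closure
          (Set.range fun n : ℕ => toWeakSpace ℂ E (cesaroMean T (n + 1) x))) := by
  have ht2 : T2Space (WeakSpace ℂ E) := weak_t2
  constructor
  · rintro ⟨P, hP⟩ x
    constructor
    · -- (1/n) Tⁿ x → 0
      have hc : Tendsto (fun n : ℕ => cesaroMean T n x) atTop (𝓝 (P x)) :=
        (tendsto_add_atTop_iff_nat 1).mp (hP x)
      have hs : Tendsto (fun n : ℕ => ((n:ℂ) * ((n + 1 : ℕ) : ℂ)⁻¹) • cesaroMean T n x)
          atTop (𝓝 ((1:ℂ) • P x)) := by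
        refine Tendsto.smul ?_ hc
        have := tendsto_ratio_complex'
        simpa [Nat.cast_add] using this
      rw [one_smul] at hs
      have hdiff := (hP x).sub hs
      rw [sub_self] at hdiff
      have h6 : Tendsto (fun n : ℕ => ((n + 1 : ℕ) : ℂ)⁻¹ • (T ^ (n+1)) x) atTop (𝓝 (0:E)) :=
        hdiff.congr fun n => (cesaro_succ_diff T n x).symm
      exact (tendsto_add_atTop_iff_nat 1).mp h6
    · -- relative weak compactness
      have hg : Tendsto (fun n : ℕ => toWeakSpace ℂ E (cesaroMean T (n + 1) x)) atTop
          (𝓝 (toWeakSpace ℂ E (P x))) := by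
        have hcont := (toWeakSpaceCLM ℂ E).continuous
        exact (hcont.tendsto _).comp (hP x)
      have hK := hg.isCompact_insert_range
      refine hK.of_isClosed_subset isClosed_closure ?_
      exact closure_minimal (Set.subset_insert _ _) hK.isClosed
  · intro H
    have h1 : ∀ x : E, Tendsto (fun n : ℕ => (n : ℂ)⁻¹ • (T ^ n) x) atTop (𝓝 (0:E)) :=
      fun x => (H x).1
    have : ContinuousSMul ℝ E := IsScalarTower.continuousSMul ℂ
    set R : Submodule ℂ E := LinearMap.range ((1 - T : E →L[ℂ] E) : E →ₗ[ℂ] E) with hRdef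
    have hRconv : Convex ℝ (R : Set E) := by
      intro a ha b hb s t _ _ _
      exact add_mem (R.smul_of_tower_mem s ha) (R.smul_of_tower_mem t hb)
    have hclos : ∀ z ∈ closure (R : Set E),
        Tendsto (fun n => cesaroMean T (n+1) z) atTop (𝓝 (0:E)) := by
      intro z hz
      refine tendsto_zero_closure hCes ?_ hz
      rintro _ ⟨w, rfl⟩
      have hw : ((1 - T : E →L[ℂ] E) : E →ₗ[ℂ] E) w = w - T w := rfl
      rw [hw]
      have := base_tendsto T h1 w
      refine this.congr fun n => ?_
      rw [cesaro_sub]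
    have key : ∀ x : E, ∃ y : E, Tendsto (fun n => cesaroMean T (n+1) x) atTop (𝓝 y) := by
      intro x
      set g : ℕ → WeakSpace ℂ E := fun n => toWeakSpace ℂ E (cesaroMean T (n+1) x) with hgdef
      have hK := (H x).2
      have hle : map g atTop ≤ 𝓟 (closure (Set.range g)) :=
        le_principal_iff.mpr (mem_map.mpr (Eventually.of_forall fun n => subset_closure ⟨n, rfl⟩))
      obtain ⟨y, hyK, hy⟩ := hK.exists_clusterPt hle
      set y' : E := (toWeakSpace ℂ E).symm y with hy'def
      have hyy' : toWeakSpace ℂ E y' = y := (toWeakSpace ℂ E).apply_symm_apply y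
      -- y' is a fixed point of T
      have hTy : T y' = y' := by
        have hφ : Continuous (fun z : WeakSpace ℂ E => WeakSpace.map T z - z) :=
          (WeakSpace.map T).continuous.sub continuous_id
      -- cluster point of the image sequence
        have hy2 : MapClusterPt y atTop g := hy
        have hcl2 : MapClusterPt (WeakSpace.map T y - y) atTop
            ((fun z : WeakSpace ℂ E => WeakSpace.map T z - z) ∘ g) :=
          hy2.continuousAt_comp hφ.continuousAt
        -- the sequence tends weakly to 0
        have hst : Tendsto (fun n => cesaroMean T (n+1) (T x - x)) atTop (𝓝 (0:E)) := by
          have h7 : Tendsto (fun n => cesaroMean T (n+1) (x - T x)) atTop (𝓝 (0:E)) := by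
            have := base_tendsto T h1 x
            refine this.congr fun n => ?_
            rw [cesaro_sub]
          have h8 := h7.neg
          rw [neg_zero] at h8
          refine h8.congr fun n => ?_
          rw [← cesaroCLM_apply, ← cesaroCLM_apply, ← map_neg, neg_sub]
        have hwk : Tendsto ((fun z : WeakSpace ℂ E => WeakSpace.map T z - z) ∘ g) atTop
            (𝓝 (0 : WeakSpace ℂ E)) := by
          have hc0 := ((toWeakSpaceCLM ℂ E).continuous.tendsto _).comp hst
          rw [map_zero] at hc0
          refine hc0.congr fun n => ?_
          show toWeakSpaceCLM ℂ E (cesaroMean T (n+1) (T x - x))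
            = WeakSpace.map T (g n) - g n
          have h9 : cesaroMean T (n+1) (T x - x)
              = T (cesaroMean T (n+1) x) - cesaroMean T (n+1) x := by
            rw [← cesaroCLM_apply, map_sub]
            congr 1
            · rw [cesaroCLM_apply]
              exact cesaro_comm T (n+1) x
            · rw [cesaroCLM_apply]
          rw [h9, map_sub]
          rfl
        -- uniqueness of cluster points of a convergent sequence
        have hz : WeakSpace.map T y - y = 0 := by
          have hne : (𝓝 (WeakSpace.map T y - y) ⊓
              map ((fun z : WeakSpace ℂ E => WeakSpace.map T z - z) ∘ g) atTop).NeBot := hcl2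
          have hle2 : map ((fun z : WeakSpace ℂ E => WeakSpace.map T z - z) ∘ g) atTop
              ≤ 𝓝 (0 : WeakSpace ℂ E) := hwk
          have := hne.mono (inf_le_inf_left _ hle2)
          exact eq_of_nhds_neBot this
        -- translate back
        have h10 : toWeakSpace ℂ E (T y' - y') = 0 := by
          rw [map_sub, hyy']
          show WeakSpace.map T (toWeakSpace ℂ E y') - y = 0
          rw [hyy'] at *
          exact hz
        have := (toWeakSpace ℂ E).map_eq_zero_iff.mp h10
        exact sub_eq_zero.mp this
      -- x - y' lies in the closure of the range of 1 - T
      have hmem : x - y' ∈ closure (R : Set E) := by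
        have hψ : Continuous (fun z : WeakSpace ℂ E => toWeakSpace ℂ E x - z) :=
          continuous_const.sub continuous_id
        have hy2 : MapClusterPt y atTop g := hy
        have hcl3 : MapClusterPt (toWeakSpace ℂ E x - y) atTop
            ((fun z : WeakSpace ℂ E => toWeakSpace ℂ E x - z) ∘ g) :=
          hy2.continuousAt_comp hψ.continuousAt
        have hsub : ∀ n, ((fun z : WeakSpace ℂ E => toWeakSpace ℂ E x - z) ∘ g) n
            ∈ toWeakSpace ℂ E '' (R : Set E) := by
          intro n
          refine ⟨x - cesaroMean T (n+1) x, sub_cesaro_mem T x n, ?_⟩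
          rw [map_sub]
          rfl
        have hcls : toWeakSpace ℂ E x - y ∈ closure (toWeakSpace ℂ E '' (R : Set E)) := by
          rw [mem_closure_iff_clusterPt]
          exact hcl3.clusterPt.mono
            (le_principal_iff.mpr (mem_map.mpr (Eventually.of_forall hsub)))
        rw [← Convex.toWeakSpace_closure ℂ hRconv] at hcls
        obtain ⟨w, hw, hweq⟩ := hcls
        have hwx : w = x - y' := by
          apply (toWeakSpace ℂ E).injective
          rw [hweq, map_sub, hyy']
        rwa [← hwx]
      refine ⟨y', ?_⟩
      have h4 := hclos _ hmem
      have h5 : Tendsto (fun n => y' + cesaroMean T (n+1) (x - y')) atTop (𝓝 (y' + 0)) :=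
        tendsto_const_nhds.add h4
      rw [add_zero] at h5
      refine h5.congr fun n => ?_
      rw [← cesaroCLM_apply, map_sub, cesaroCLM_apply, cesaroCLM_apply, cesaro_fixed T n hTy]
      abel
    -- build the limit operator
    choose Plim hPlim using key
    have hcont : Continuous Plim :=
      Filter.Tendsto.continuous_of_equicontinuous (tendsto_pi_nhds.mpr hPlim) hCes
    have hadd : ∀ a b : E, Plim (a + b) = Plim a + Plim b := by
      intro a b
      refine tendsto_nhds_unique (hPlim (a + b)) (((hPlim a).add (hPlim b)).congr fun n => ?_)
      rw [← cesaroCLM_apply, ← cesaroCLM_apply, ← cesaroCLM_apply, ← map_add]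
    have hsmul : ∀ (c : ℂ) (a : E), Plim (c • a) = c • Plim a := by
      intro c a
      refine tendsto_nhds_unique (hPlim (c • a)) (((hPlim a).const_smul c).congr fun n => ?_)
      rw [← cesaroCLM_apply, ← cesaroCLM_apply, ← map_smul]
    exact ⟨⟨{ toFun := Plim, map_add' := hadd, map_smul' := hsmul }, hcont⟩, hPlim⟩
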